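/- Let ν₁ and ν₂ be probability measures on S, let d̂ be a probability mass function on S̃, and let ε ≥ 0, η ≥ 0, α ≥ 0, R_max ≥ 0, and H ≥ 0 be real numbers. Suppose R : S → ℝ is measurable with 0 ≤ R(s) ≤ R_max for all s ∈ S, R̃ : S̃ → ℝ satisfies 0 ≤ R̃(s̃) ≤ R_max + α for all s̃ ∈ S̃, and |R(s) − R̃(φ(s))| ≤ α for all s ∈ S. If D_KL(φ₊ν₁ ‖ d̂) ≤ ε and D_KL(d̂ ‖ φ₊ν₂) ≤ η, then H·∫ R dν₁ − H·∫ R dν₂ ≤ H·(R_max + α)·(√(2ε) + √(2η)) + 2·H·α. -/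

import Mathlib

open MeasureTheory Real
open scoped BigOperators

/-- A probability mass function on a finite type, as a real-valued function. -/
def IsPmf {T : Type*} [Fintype T] (p : T → ℝ) : Prop :=
  (∀ t, 0 ≤ p t) ∧ ∑ t, p t = 1

open Classical in
/-- Kullback–Leibler divergence between pmfs on a finite type, valued in `EReal`,
with conventions `0 · log 0 = 0` and `⊤` when absolute continuity fails. -/
noncomputable def klDiv {T : Type*} [Fintype T] (p q : T → ℝ) : EReal :=
  if ∀ t, q t = 0 → p t = 0 then ((∑ t, p t * Real.log (p t / q t) : ℝ) : EReal)
  else ⊤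

/-- Pushforward of a measure under `φ`, as a real-valued mass function on a finite type. -/
noncomputable def pushforward {S : Type*} [MeasurableSpace S] {T : Type*}
    (φ : S → T) (ν : Measure S) : T → ℝ :=
  fun t => (ν (φ ⁻¹' {t})).toReal

/-- Square root on `EReal`, sending `⊤` to `⊤`. -/
noncomputable def esqrt (x : EReal) : EReal :=
  if x = ⊤ then ⊤ else ((Real.sqrt x.toReal : ℝ) : EReal)


lemma log_ge (x : ℝ) (hx : 0 < x) : 1 - 1/x ≤ Real.log x := by
  have := Real.log_le_sub_one_of_pos (show (0:ℝ) < 1/x by positivity)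
  rw [Real.log_div one_ne_zero (ne_of_gt hx)] at this
  rw [Real.log_one, one_div] at this
  rw [one_div]
  linarith

lemma pointwise_pinsker (p q : ℝ) (hp : 0 ≤ p) (hq : 0 ≤ q) (hac : q = 0 → p = 0) :
    (p - q)^2 / (4 * (p + q)) ≤ p * Real.log (p / q) - p + q := by
  rcases eq_or_lt_of_le hq with hq0 | hq0
  · have hp0 := hac hq0.symm
    simp [← hq0, hp0]
  rcases eq_or_lt_of_le hp with hp0 | hp0
  · rw [← hp0]
    simp only [zero_mul, zero_sub, zero_add, neg_add_cancel, zero_sub, sub_zero]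
    rw [div_le_iff₀ (by positivity)]
    nlinarith
  · -- main case
    set a := Real.sqrt p with ha
    set b := Real.sqrt q with hb
    have ha2 : a^2 = p := Real.sq_sqrt hp
    have hb2 : b^2 = q := Real.sq_sqrt hq
    have hapos : 0 < a := Real.sqrt_pos.2 hp0
    have hbpos : 0 < b := Real.sqrt_pos.2 hq0
    have hlog : 1 - b/a ≤ Real.log (a/b) := by
      have := log_ge (a/b) (by positivity)
      rwa [one_div, inv_div] at this
    have hlogpq : 2 - 2*(b/a) ≤ Real.log (p/q) := by
      have : Real.log (p/q) = 2 * Real.log (a/b) := by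
        rw [← ha2, ← hb2, ← div_pow, Real.log_pow]
        push_cast; ring
      rw [this]; linarith
    have hmul : p * (2 - 2*(b/a)) ≤ p * Real.log (p/q) :=
      mul_le_mul_of_nonneg_left hlogpq hp
    have hexp : p * (2 - 2*(b/a)) = 2*a^2 - 2*a*b := by
      rw [← ha2]; field_simp
    rw [div_le_iff₀ (by positivity)]
    nlinarith [sq_nonneg (a-b), sq_nonneg (a+b), sq_nonneg (a*b), mul_pos hapos hbpos,
      mul_nonneg (sq_nonneg (a-b)) (mul_pos hapos hbpos).le]

lemma half_l1_le_sqrt {T : Type*} [Fintype T] (p q : T → ℝ)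
    (hp0 : ∀ t, 0 ≤ p t) (hq0 : ∀ t, 0 ≤ q t)
    (hp1 : ∑ t, p t = 1) (hq1 : ∑ t, q t = 1)
    (hac : ∀ t, q t = 0 → p t = 0) :
    (∑ t, |p t - q t|) / 2 ≤ Real.sqrt (2 * ∑ t, p t * Real.log (p t / q t)) := by
  classical
  set K := ∑ t, p t * Real.log (p t / q t) with hK
  set Tm := ∑ t, (p t - q t)^2 / (p t + q t) with hTm
  have hTmK : Tm ≤ 4 * K := by
    have h1 : ∑ t, (p t - q t)^2 / (4 * (p t + q t)) ≤ K := by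
      have : K = ∑ t, (p t * Real.log (p t / q t) - p t + q t) := by
        rw [hK]
        rw [Finset.sum_add_distrib, Finset.sum_sub_distrib, hp1, hq1]
        ring
      rw [this]
      exact Finset.sum_le_sum fun t _ =>
        pointwise_pinsker (p t) (q t) (hp0 t) (hq0 t) (hac t)
    have h2 : ∑ t, (p t - q t)^2 / (4 * (p t + q t)) = Tm / 4 := by
      rw [hTm, Finset.sum_div]
      exact Finset.sum_congr rfl fun t _ => by
        rw [div_div]; ring_nf
    linarith [h2 ▸ h1]
  have hTnn : 0 ≤ Tm := Finset.sum_nonneg fun t _ =>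
    div_nonneg (sq_nonneg _) (add_nonneg (hp0 t) (hq0 t))
  -- Cauchy-Schwarz / Sedrakyan
  have hCS : (∑ t, |p t - q t|)^2 ≤ 2 * Tm := by
    set s := Finset.univ.filter (fun t => 0 < p t + q t) with hs
    have hsum_eq : ∑ t, |p t - q t| = ∑ t ∈ s, |p t - q t| := by
      symm
      apply Finset.sum_filter_of_ne
      intro t _ h
      by_contra hpos
      push_neg at hpos
      have h1 : p t = 0 := le_antisymm (by nlinarith [hq0 t]) (hp0 t)
      have h2 : q t = 0 := le_antisymm (by nlinarith [hp0 t]) (hq0 t)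
      simp [h1, h2] at h
    rcases Finset.eq_empty_or_nonempty s with hse | hsne
    · rw [hsum_eq, hse]; simpa using hTnn
    · have hgpos : ∀ t ∈ s, 0 < p t + q t := fun t ht => (Finset.mem_filter.1 ht).2
      have hsed := Finset.sq_sum_div_le_sum_sq_div s (fun t => |p t - q t|) hgpos
      have hgs : 0 < ∑ t ∈ s, (p t + q t) := Finset.sum_pos hgpos hsne
      have habs : ∀ t ∈ s, |p t - q t|^2 / (p t + q t) = (p t - q t)^2 / (p t + q t) := by
        intro t _; rw [sq_abs]
      rw [Finset.sum_congr rfl habs] at hsed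
      have hsub : ∑ t ∈ s, (p t - q t)^2 / (p t + q t) ≤ Tm := by
        rw [hTm]
        exact Finset.sum_le_sum_of_subset_of_nonneg (Finset.subset_univ s)
          (fun t _ _ => div_nonneg (sq_nonneg _) (add_nonneg (hp0 t) (hq0 t)))
      have hg2 : ∑ t ∈ s, (p t + q t) ≤ 2 := by
        have : ∑ t, (p t + q t) = 2 := by
          rw [Finset.sum_add_distrib, hp1, hq1]; norm_num
        calc ∑ t ∈ s, (p t + q t) ≤ ∑ t, (p t + q t) :=
              Finset.sum_le_sum_of_subset_of_nonneg (Finset.subset_univ s)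
                (fun t _ _ => add_nonneg (hp0 t) (hq0 t))
          _ = 2 := this
      rw [hsum_eq]
      have := (div_le_iff₀ hgs).1 hsed
      calc (∑ t ∈ s, |p t - q t|)^2 ≤ (∑ t ∈ s, (p t - q t)^2/(p t + q t)) * (∑ t ∈ s, (p t + q t)) := this
        _ ≤ Tm * 2 := by
            apply mul_le_mul hsub hg2 hgs.le hTnn
        _ = 2 * Tm := by ring
  have hKnn : 0 ≤ K := by linarith
  apply Real.le_sqrt_of_sq_le
  have habsnn : 0 ≤ ∑ t, |p t - q t| := Finset.sum_nonneg fun t _ => abs_nonneg _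
  rw [div_pow]
  rw [div_le_iff₀ (by norm_num : (0:ℝ) < 2^2)]
  nlinarith


section Helpers

variable {S : Type*} [MeasurableSpace S]
variable {St : Type*} [Fintype St] [MeasurableSpace St] [MeasurableSingletonClass St]

lemma integral_comp_eq_sum (φ : S → St) (hφ : Measurable φ)
    (ν : Measure S) [IsProbabilityMeasure ν] (g : St → ℝ) :
    ∫ s, g (φ s) ∂ν = ∑ t, pushforward φ ν t * g t := by
  have hg : Measurable g := measurable_of_countable g
  have h1 : ∫ s, g (φ s) ∂ν = ∫ t, g t ∂(Measure.map φ ν) :=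
    (integral_map hφ.aemeasurable hg.aestronglyMeasurable).symm
  haveI : IsProbabilityMeasure (Measure.map φ ν) :=
    Measure.isProbabilityMeasure_map hφ.aemeasurable
  rw [h1, integral_fintype Integrable.of_finite]
  refine Finset.sum_congr rfl fun t _ => ?_
  rw [Measure.real, Measure.map_apply hφ (measurableSet_singleton t)]
  simp [pushforward, smul_eq_mul]

lemma pushforward_isPmf (φ : S → St) (hφ : Measurable φ)
    (ν : Measure S) [IsProbabilityMeasure ν] : IsPmf (pushforward φ ν) := by
  constructor
  · exact fun t => ENNReal.toReal_nonneg
  · have := integral_comp_eq_sum φ hφ ν (fun _ => (1:ℝ))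
    simp only [mul_one] at this
    rw [← this]
    simp

lemma klDiv_le_coe {T : Type*} [Fintype T] (p q : T → ℝ) (c : ℝ)
    (h : klDiv p q ≤ (c : EReal)) :
    (∀ t, q t = 0 → p t = 0) ∧ ∑ t, p t * Real.log (p t / q t) ≤ c := by
  classical
  unfold klDiv at h
  by_cases hc : ∀ t, q t = 0 → p t = 0
  · rw [if_pos hc] at h
    exact ⟨hc, by exact_mod_cast h⟩
  · rw [if_neg hc] at h
    exact absurd h (EReal.coe_lt_top c).not_ge

end Helpers

/-- The suboptimality bound from the chain of inequalities in the proof of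
Theorem 5.1, with the additive slack `2·H·α` made explicit. -/
theorem visitation_suboptimality_bound_with_slack
    {S : Type*} [MeasurableSpace S]
    {St : Type*} [Fintype St] [MeasurableSpace St] [MeasurableSingletonClass St]
    (φ : S → St) (hφ : Measurable φ)
    (ν₁ ν₂ : Measure S) [IsProbabilityMeasure ν₁] [IsProbabilityMeasure ν₂]
    (dhat : St → ℝ) (hdhat : IsPmf dhat)
    (ε η α Rmax H : ℝ)
    (hε : 0 ≤ ε) (hη : 0 ≤ η) (hα : 0 ≤ α) (hRmax : 0 ≤ Rmax) (hH : 0 ≤ H)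
    (R : S → ℝ) (hRmeas : Measurable R) (hR0 : ∀ s, 0 ≤ R s) (hRle : ∀ s, R s ≤ Rmax)
    (Rtil : St → ℝ) (hRtil0 : ∀ t, 0 ≤ Rtil t) (hRtille : ∀ t, Rtil t ≤ Rmax + α)
    (habs : ∀ s, |R s - Rtil (φ s)| ≤ α)
    (hKL1 : klDiv (pushforward φ ν₁) dhat ≤ (ε : EReal))
    (hKL2 : klDiv dhat (pushforward φ ν₂) ≤ (η : EReal)) :
    H * ∫ s, R s ∂ν₁ - H * ∫ s, R s ∂ν₂ ≤
      H * (Rmax + α) * (Real.sqrt (2 * ε) + Real.sqrt (2 * η)) + 2 * H * α := by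
  classical
  set p₁ := pushforward φ ν₁ with hp₁
  set p₂ := pushforward φ ν₂ with hp₂
  have hp₁pmf : IsPmf p₁ := pushforward_isPmf φ hφ ν₁
  have hp₂pmf : IsPmf p₂ := pushforward_isPmf φ hφ ν₂
  obtain ⟨hac₁, hK₁⟩ := klDiv_le_coe _ _ _ hKL1
  obtain ⟨hac₂, hK₂⟩ := klDiv_le_coe _ _ _ hKL2
  -- Pinsker bounds
  have hPin₁ : (∑ t, |p₁ t - dhat t|) / 2 ≤ Real.sqrt (2 * ε) := by
    refine le_trans (half_l1_le_sqrt p₁ dhat hp₁pmf.1 hdhat.1 hp₁pmf.2 hdhat.2 hac₁) ?_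
    exact Real.sqrt_le_sqrt (by linarith)
  have hPin₂ : (∑ t, |dhat t - p₂ t|) / 2 ≤ Real.sqrt (2 * η) := by
    refine le_trans (half_l1_le_sqrt dhat p₂ hdhat.1 hp₂pmf.1 hdhat.2 hp₂pmf.2 hac₂) ?_
    exact Real.sqrt_le_sqrt (by linarith)
  -- triangle inequality for L1
  have htri : (∑ t, |p₁ t - p₂ t|) / 2 ≤ Real.sqrt (2 * ε) + Real.sqrt (2 * η) := by
    have : ∑ t, |p₁ t - p₂ t| ≤ (∑ t, |p₁ t - dhat t|) + ∑ t, |dhat t - p₂ t| := by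
      rw [← Finset.sum_add_distrib]
      exact Finset.sum_le_sum fun t _ => by
        have := abs_sub_le (p₁ t) (dhat t) (p₂ t); linarith
    linarith
  -- bound the weighted sum difference
  have hM : 0 ≤ Rmax + α := by linarith
  have hsumdiff : (∑ t, p₁ t * Rtil t) - (∑ t, p₂ t * Rtil t) ≤
      (Rmax + α) * ((∑ t, |p₁ t - p₂ t|) / 2) := by
    have h1 : (∑ t, p₁ t * Rtil t) - (∑ t, p₂ t * Rtil t)
        = ∑ t, (p₁ t - p₂ t) * Rtil t := by
      rw [← Finset.sum_sub_distrib]; exact Finset.sum_congr rfl fun t _ => by ring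
    have h2 : ∑ t, (p₁ t - p₂ t) * Rtil t ≤
        ∑ t, ((p₁ t - p₂ t) + |p₁ t - p₂ t|) / 2 * (Rmax + α) := by
      refine Finset.sum_le_sum fun t _ => ?_
      rcases le_or_gt 0 (p₁ t - p₂ t) with h | h
      · rw [abs_of_nonneg h]
        have : ((p₁ t - p₂ t) + (p₁ t - p₂ t)) / 2 = p₁ t - p₂ t := by ring
        rw [this]
        exact mul_le_mul_of_nonneg_left (hRtille t) h
      · rw [abs_of_neg h]
        have : ((p₁ t - p₂ t) + -(p₁ t - p₂ t)) / 2 * (Rmax + α) = 0 := by ring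
        rw [this]
        exact mul_nonpos_of_nonpos_of_nonneg h.le (hRtil0 t)
    have h3 : ∑ t, ((p₁ t - p₂ t) + |p₁ t - p₂ t|) / 2 * (Rmax + α)
        = (Rmax + α) * ((∑ t, |p₁ t - p₂ t|) / 2) := by
      have hz : ∑ t, (p₁ t - p₂ t) = 0 := by
        rw [Finset.sum_sub_distrib, hp₁pmf.2, hp₂pmf.2]; ring
      have : ∑ t, ((p₁ t - p₂ t) + |p₁ t - p₂ t|) / 2 * (Rmax + α)
          = ((∑ t, (p₁ t - p₂ t)) + (∑ t, |p₁ t - p₂ t|)) / 2 * (Rmax + α) := by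
        rw [← Finset.sum_mul, ← Finset.sum_div, Finset.sum_add_distrib]
      rw [this, hz]; ring
    rw [h1]; rw [h3] at h2; exact h2
  -- integral bounds
  have hRtilmeas : Measurable Rtil := measurable_of_countable Rtil
  have hintbound : ∀ (ν : Measure S) [IsProbabilityMeasure ν],
      |∫ s, R s ∂ν - ∑ t, pushforward φ ν t * Rtil t| ≤ α := by
    intro ν hν
    have hIntR : Integrable R ν := by
      refine Integrable.mono' (integrable_const Rmax) hRmeas.aestronglyMeasurable ?_
      exact ae_of_all _ fun s => by rw [Real.norm_eq_abs, abs_of_nonneg (hR0 s)]; exact hRle s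
    have hIntRt : Integrable (fun s => Rtil (φ s)) ν := by
      refine Integrable.mono' (integrable_const (Rmax + α))
        (hRtilmeas.comp hφ).aestronglyMeasurable ?_
      exact ae_of_all _ fun s => by
        rw [Real.norm_eq_abs, abs_of_nonneg (hRtil0 (φ s))]; exact hRtille (φ s)
    have heq : ∫ s, R s ∂ν - ∑ t, pushforward φ ν t * Rtil t
        = ∫ s, (R s - Rtil (φ s)) ∂ν := by
      rw [integral_sub hIntR hIntRt, integral_comp_eq_sum φ hφ ν Rtil]
    rw [heq]
    calc |∫ s, (R s - Rtil (φ s)) ∂ν| ≤ ∫ s, |R s - Rtil (φ s)| ∂ν := by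
          simpa [Real.norm_eq_abs] using
            norm_integral_le_integral_norm (fun s => R s - Rtil (φ s)) (μ := ν)
      _ ≤ ∫ _, α ∂ν := integral_mono (hIntR.sub hIntRt).abs (integrable_const α)
            (fun s => habs s)
      _ = α := by simp
  have hb₁ := abs_le.1 (hintbound ν₁)
  have hb₂ := abs_le.1 (hintbound ν₂)
  -- combine
  have hcore : (∫ s, R s ∂ν₁) - (∫ s, R s ∂ν₂) ≤
      (Rmax + α) * (Real.sqrt (2 * ε) + Real.sqrt (2 * η)) + 2 * α := by
    have h4 : (Rmax + α) * ((∑ t, |p₁ t - p₂ t|) / 2) ≤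
        (Rmax + α) * (Real.sqrt (2 * ε) + Real.sqrt (2 * η)) :=
      mul_le_mul_of_nonneg_left htri hM
    have := hb₁.2
    have := hb₂.1
    simp only [← hp₁, ← hp₂] at *
    linarith
  have := mul_le_mul_of_nonneg_left hcore hH
  calc H * ∫ s, R s ∂ν₁ - H * ∫ s, R s ∂ν₂
      = H * ((∫ s, R s ∂ν₁) - (∫ s, R s ∂ν₂)) := by ring
    _ ≤ H * ((Rmax + α) * (Real.sqrt (2 * ε) + Real.sqrt (2 * η)) + 2 * α) := this
    _ = H * (Rmax + α) * (Real.sqrt (2 * ε) + Real.sqrt (2 * η)) + 2 * H * α := by ring
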